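/- For every stationary process (X_i)_{i∈ℤ} over a finite alphabet 𝕏 and all positive integers k ≤ n, the conditional block entropy given the shift-invariant σ-algebra dominates the expected plug-in estimate: H(X_1^k|ℐ) ≥ E[H(k, X_1^n)]. -/

import Mathlib

set_option linter.unusedSectionVars false
set_option maxHeartbeats 1000000


open MeasureTheory Filter Real

variable {𝕏 : Type*} [Fintype 𝕏] [Nonempty 𝕏] [DecidableEq 𝕏]
  [MeasurableSpace 𝕏] [MeasurableSingletonClass 𝕏]

/-- The left shift on two-sided sequences: `(shift ω) i = ω (i + 1)`. -/
def shift (ω : ℤ → 𝕏) : ℤ → 𝕏 := fun i => ω (i + 1)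

/-- The block `X_{s+1}^{s+l}` of a sequence `ω`, as a tuple in `𝕏^l`. -/
def blk (s l : ℕ) (ω : ℤ → 𝕏) : Fin l → 𝕏 := fun i => ω ((s : ℤ) + 1 + (i : ℤ))

/-- Shannon entropy (base 2) of a distribution `p` on a finite set:
`H(p) = -∑_{w : p w > 0} p w * log₂ (p w)` (`logb 2 0 = 0`, so zero-mass
points contribute nothing). -/
noncomputable def Hent {A : Type*} [Fintype A] (p : A → ℝ) : ℝ :=
  -∑ w, p w * Real.logb 2 (p w)

/-- Empirical nonoverlapping-block distribution
`p_k(w, x_1^n) = ⌊n/k⌋⁻¹ ∑_{i=1}^{⌊n/k⌋} 1[x_{(i-1)k+1}^{ik} = w]`. -/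
noncomputable def empDist (k n : ℕ) (ω : ℤ → 𝕏) : (Fin k → 𝕏) → ℝ :=
  fun w => (∑ i ∈ Finset.range (n / k), if blk (i * k) k ω = w then (1 : ℝ) else 0) / (n / k : ℕ)

/-- Plug-in estimator `H(k, x_1^n)` of the block entropy. -/
noncomputable def plugIn (k n : ℕ) (ω : ℤ → 𝕏) : ℝ := Hent (empDist k n ω)

/-- True block distribution `p_k(w) = P(X_1^k = w)`. -/
noncomputable def pblock (μ : Measure (ℤ → 𝕏)) (k : ℕ) : (Fin k → 𝕏) → ℝ :=
  fun w => (μ {ω | blk 0 k ω = w}).toReal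

/-- Block entropy `H(k) = H(p_k)`. -/
noncomputable def Hblock (μ : Measure (ℤ → 𝕏)) (k : ℕ) : ℝ := Hent (pblock μ k)

/-- Number `D(k, x_1^n)` of distinct nonoverlapping `k`-blocks in `x_1^n`. -/
noncomputable def Dcount (k n : ℕ) (ω : ℤ → 𝕏) : ℕ :=
  Set.ncard {w : Fin k → 𝕏 | ∃ i < n / k, blk (i * k) k ω = w}

/-- Length bound `K(k, x_1^n)` of the modified `k`-block code:
`K(k,x_1^n) = 2 log₂ k + (n/k)(H(k,x_1^n) + 2) + 3 k log₂|𝕏| (D(k,x_1^n) + 1)`. -/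
noncomputable def Kcode (k n : ℕ) (ω : ℤ → 𝕏) : ℝ :=
  2 * Real.logb 2 k + ((n : ℝ) / k) * (plugIn k n ω + 2)
    + 3 * k * Real.logb 2 (Fintype.card 𝕏) * (Dcount k n ω + 1)

/-- Conditional probability `P(X_1^k = w | ℐ)` given the shift-invariant
σ-algebra `ℐ`, as a function of the sample point. -/
noncomputable def condP (μ : Measure (ℤ → 𝕏)) (k : ℕ) (w : Fin k → 𝕏) : (ℤ → 𝕏) → ℝ :=
  μ[Set.indicator {ω | blk 0 k ω = w} (fun _ => (1 : ℝ)) | MeasurableSpace.invariants shift]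

/-- Conditional block entropy `H(X_1^k | ℐ) = E[-log₂ P(X_1^k = w | ℐ)|_{w = X_1^k}]`. -/
noncomputable def condH (μ : Measure (ℤ → 𝕏)) (k : ℕ) : ℝ :=
  ∫ ω, -Real.logb 2 (condP μ k (blk 0 k ω) ω) ∂μ

/-- `σ(y) = min(2^y, 1)`. -/
noncomputable def sigmaFn (y : ℝ) : ℝ := min ((2 : ℝ) ^ y) 1

/-- Negative part `x⁻ = -x · 1[x < 0]`. -/
noncomputable def nPart (x : ℝ) : ℝ := if x < 0 then -x else 0

section AuxReal

/-- Gibbs' inequality. -/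
lemma gibbs_ineq {A : Type*} [Fintype A] (p q : A → ℝ)
    (hp0 : ∀ w, 0 ≤ p w) (hp1 : ∑ w, p w = 1)
    (hq0 : ∀ w, 0 ≤ q w) (hq1 : ∑ w, q w ≤ 1)
    (hsupp : ∀ w, 0 < p w → 0 < q w) :
    Hent p ≤ -∑ w, p w * Real.logb 2 (q w) := by
  have hlog2 : (0:ℝ) < Real.log 2 := Real.log_pos one_lt_two
  have hterm : ∀ w, p w * Real.logb 2 (q w) - p w * Real.logb 2 (p w)
      ≤ (q w - p w) / Real.log 2 := by
    intro w
    rcases (hp0 w).eq_or_lt with h | h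
    · rw [← h]
      have : (0:ℝ) ≤ (q w - 0)/Real.log 2 := div_nonneg (by linarith [hq0 w]) hlog2.le
      simpa using this
    · have hq := hsupp w h
      have hcalc : p w * Real.logb 2 (q w) - p w * Real.logb 2 (p w)
          = p w * Real.log (q w / p w) / Real.log 2 := by
        rw [Real.log_div hq.ne' h.ne']
        unfold Real.logb
        ring
      rw [hcalc]
      have h1 : Real.log (q w / p w) ≤ q w / p w - 1 :=
        Real.log_le_sub_one_of_pos (div_pos hq h)
      have h2 : p w * Real.log (q w / p w) ≤ q w - p w := by
        calc p w * Real.log (q w / p w) ≤ p w * (q w / p w - 1) :=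
              mul_le_mul_of_nonneg_left h1 h.le
          _ = q w - p w := by field_simp
      gcongr
  have hsum : ∑ w, (p w * Real.logb 2 (q w) - p w * Real.logb 2 (p w)) ≤ 0 := by
    calc ∑ w, (p w * Real.logb 2 (q w) - p w * Real.logb 2 (p w))
        ≤ ∑ w, (q w - p w) / Real.log 2 := Finset.sum_le_sum fun w _ => hterm w
      _ = (∑ w, q w - ∑ w, p w) / Real.log 2 := by
          rw [← Finset.sum_div, Finset.sum_sub_distrib]
      _ ≤ 0 := by
          apply div_nonpos_of_nonpos_of_nonneg _ hlog2.le
          rw [hp1]; linarith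
  rw [Finset.sum_sub_distrib] at hsum
  unfold Hent
  linarith

lemma mul_neg_logb_le (x : ℝ) (h0 : 0 ≤ x) (h1 : x ≤ 1) :
    x * max (-Real.logb 2 x) 0 ≤ 1 / Real.log 2 := by
  have hlog2 : (0:ℝ) < Real.log 2 := Real.log_pos one_lt_two
  rcases h0.eq_or_lt with h | h
  · rw [← h, zero_mul]
    positivity
  · have hmax : max (-Real.logb 2 x) 0 = -Real.log x / Real.log 2 := by
      rw [max_eq_left (neg_nonneg.mpr (Real.logb_nonpos one_lt_two h.le h1))]
      unfold Real.logb; ring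
    rw [hmax]
    have key : x * (-Real.log x) ≤ 1 := by
      have h2 := Real.log_le_sub_one_of_pos (inv_pos.mpr h)
      rw [Real.log_inv] at h2
      nlinarith [mul_le_mul_of_nonneg_left h2 h0, mul_inv_cancel₀ h.ne']
    calc x * (-Real.log x / Real.log 2) = x * (-Real.log x) / Real.log 2 := by ring
      _ ≤ 1 / Real.log 2 := by gcongr

end AuxReal

section AuxMeas

lemma measurable_shift : Measurable (shift (𝕏 := 𝕏)) :=
  measurable_pi_lambda _ fun _ => measurable_pi_apply _

lemma measurable_blk (s l : ℕ) : Measurable (blk (𝕏 := 𝕏) s l) :=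
  measurable_pi_lambda _ fun _ => measurable_pi_apply _

lemma measurableSet_blk (s l : ℕ) (w : Fin l → 𝕏) :
    MeasurableSet {ω : ℤ → 𝕏 | blk s l ω = w} :=
  measurable_blk s l (measurableSet_singleton w)

lemma shift_iterate (j : ℕ) (ω : ℤ → 𝕏) : shift^[j] ω = fun i => ω (i + j) := by
  induction j generalizing ω with
  | zero => simp
  | succ j ih =>
    rw [Function.iterate_succ_apply, ih]
    funext i
    simp only [shift]
    congr 1
    push_cast
    ring

lemma blk_shift (j k : ℕ) (ω : ℤ → 𝕏) : blk j k ω = blk 0 k (shift^[j] ω) := by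
  funext t
  simp only [blk, shift_iterate]
  congr 1
  push_cast
  ring

open MeasurableSpace in
lemma condexp_shift (μ : Measure (ℤ → 𝕏)) [IsProbabilityMeasure μ]
    (hstat : MeasurePreserving shift μ μ) {f : (ℤ → 𝕏) → ℝ} (hf : Integrable f μ) :
    μ[f ∘ shift | invariants shift] =ᵐ[μ] μ[f | invariants shift] := by
  have hle : invariants (shift (𝕏 := 𝕏)) ≤ _ := invariants_le _
  refine (ae_eq_condExp_of_forall_setIntegral_eq hle ((hstat.integrable_comp hf.1).mpr hf)
    (fun s _ _ => integrable_condExp.integrableOn) (fun s hs _ => ?_)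
    (StronglyMeasurable.aestronglyMeasurable stronglyMeasurable_condExp)).symm
  rw [setIntegral_condExp hle hf hs]
  obtain ⟨hsm, hsinv⟩ := measurableSet_invariants.mp hs
  have hmap : Measure.map shift (μ.restrict s) = μ.restrict s := by
    conv_lhs => rw [← hsinv]
    rw [← Measure.restrict_map measurable_shift hsm, hstat.map_eq]
  have hF : AEStronglyMeasurable f (Measure.map shift (μ.restrict s)) := by
    rw [hmap]; exact hf.1.restrict
  calc ∫ x in s, f x ∂μ = ∫ x, f x ∂(Measure.map shift (μ.restrict s)) := by rw [hmap]
    _ = ∫ x in s, (f ∘ shift) x ∂μ := integral_map measurable_shift.aemeasurable hF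

open MeasurableSpace in
lemma condexp_shift_iter (μ : Measure (ℤ → 𝕏)) [IsProbabilityMeasure μ]
    (hstat : MeasurePreserving shift μ μ) {f : (ℤ → 𝕏) → ℝ} (hf : Integrable f μ) (j : ℕ) :
    μ[f ∘ shift^[j] | invariants shift] =ᵐ[μ] μ[f | invariants shift] := by
  induction j with
  | zero =>
    simp only [Function.iterate_zero, Function.comp_id]
    exact EventuallyEq.rfl
  | succ j ih =>
    have h1 : f ∘ shift^[j+1] = (f ∘ shift^[j]) ∘ shift := by
      rw [Function.iterate_succ, Function.comp_assoc]
    rw [h1]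
    exact (condexp_shift μ hstat (((hstat.iterate j).integrable_comp hf.1).mpr hf)).trans ih

end AuxMeas

section AuxCond

variable {α : Type*} {m m0 : MeasurableSpace α} {μ : @Measure α m0}

lemma ae_zero_of_condexp_nonpos (hle : m ≤ m0) [IsFiniteMeasure μ] {f : α → ℝ}
    (hf : Integrable f μ) (hf0 : ∀ ω, 0 ≤ f ω) :
    ∀ᵐ ω ∂μ, (μ[f|m]) ω ≤ 0 → f ω = 0 := by
  have hGm : StronglyMeasurable[m] (μ[f|m]) := stronglyMeasurable_condExp
  have hs_m : MeasurableSet[m] {ω | (μ[f|m]) ω ≤ 0} := hGm.measurable measurableSet_Iic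
  have hs : MeasurableSet {ω | (μ[f|m]) ω ≤ 0} := hle _ hs_m
  have h1 : ∫ ω in {ω | (μ[f|m]) ω ≤ 0}, f ω ∂μ ≤ 0 := by
    rw [← setIntegral_condExp hle hf hs_m]
    exact setIntegral_nonpos hs fun ω hω => hω
  have h2 : 0 ≤ ∫ ω in {ω | (μ[f|m]) ω ≤ 0}, f ω ∂μ :=
    setIntegral_nonneg hs fun ω _ => hf0 ω
  have h3 : f =ᵐ[μ.restrict {ω | (μ[f|m]) ω ≤ 0}] 0 :=
    (integral_eq_zero_iff_of_nonneg_ae (Eventually.of_forall hf0) hf.restrict).mp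
      (le_antisymm h1 h2)
  filter_upwards [(ae_restrict_iff' hs).mp h3] with ω hω hG
  exact hω hG

lemma pullout_int (hle : m ≤ m0) [IsProbabilityMeasure μ]
    {f g : α → ℝ} (hfm : Measurable f) (hf0 : ∀ ω, 0 ≤ f ω) (hf1 : ∀ ω, f ω ≤ 1)
    (hg : StronglyMeasurable[m] g) (hg0 : ∀ ω, 0 ≤ g ω)
    {C : ℝ} (hC : ∀ᵐ ω ∂μ, (μ[f|m]) ω * g ω ≤ C) :
    Integrable (fun ω => f ω * g ω) μ ∧
      ∫ ω, f ω * g ω ∂μ = ∫ ω, (μ[f|m]) ω * g ω ∂μ := by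
  have hfi : Integrable f μ := by
    refine (integrable_const (1:ℝ)).mono' hfm.aestronglyMeasurable ?_
    filter_upwards with ω
    rw [Real.norm_eq_abs, abs_of_nonneg (hf0 ω)]
    exact hf1 ω
  have hGm0 : Measurable (μ[f|m]) := stronglyMeasurable_condExp.measurable.mono hle le_rfl
  have hgm0 : Measurable g := hg.measurable.mono hle le_rfl
  have hG0 : 0 ≤ᵐ[μ] (μ[f|m]) := condExp_nonneg (Eventually.of_forall hf0)
  set gN : ℕ → α → ℝ := fun N ω => min (g ω) N with hgNdef
  have hgN0 : ∀ N ω, 0 ≤ gN N ω := fun N ω => le_min (hg0 ω) (Nat.cast_nonneg N)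
  have hgNle : ∀ N ω, gN N ω ≤ g ω := fun N ω => min_le_left _ _
  have hgNbdd : ∀ N ω, ‖gN N ω‖ ≤ (N : ℝ) := fun N ω => by
    rw [Real.norm_eq_abs, abs_of_nonneg (hgN0 N ω)]; exact min_le_right _ _
  have hgNm : ∀ N, StronglyMeasurable[m] (gN N) := fun N =>
    (hg.measurable.min measurable_const).stronglyMeasurable
  have hgNm0 : ∀ N, Measurable (gN N) := fun N => (hgNm N).measurable.mono hle le_rfl
  -- truncated equality
  have key : ∀ N, ∫ ω, f ω * gN N ω ∂μ = ∫ ω, (μ[f|m]) ω * gN N ω ∂μ := by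
    intro N
    have hint : Integrable (gN N * f) μ :=
      hfi.bdd_mul (hgNm0 N).aestronglyMeasurable (Eventually.of_forall (hgNbdd N))
    have h2 := condExp_mul_of_stronglyMeasurable_left (hgNm N) hint hfi
    calc ∫ ω, f ω * gN N ω ∂μ = ∫ ω, (gN N * f) ω ∂μ := by
          simp only [Pi.mul_apply, mul_comm]
      _ = ∫ ω, (μ[gN N * f|m]) ω ∂μ := (integral_condExp hle).symm
      _ = ∫ ω, (gN N * μ[f|m]) ω ∂μ := integral_congr_ae h2
      _ = ∫ ω, (μ[f|m]) ω * gN N ω ∂μ := by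
          simp only [Pi.mul_apply, mul_comm]
  -- integrability of truncations
  have hgNint : ∀ N, Integrable (gN N) μ :=
    fun N => (integrable_const (N:ℝ)).mono' (hgNm0 N).aestronglyMeasurable
      (Eventually.of_forall (hgNbdd N))
  have hintN : ∀ N, Integrable (fun ω => f ω * gN N ω) μ := by
    intro N
    refine (hgNint N).bdd_mul (c := 1) hfm.aestronglyMeasurable ?_
    filter_upwards with ω
    rw [Real.norm_eq_abs, abs_of_nonneg (hf0 ω)]
    exact hf1 ω
  have hGgNint : ∀ N, Integrable (fun ω => (μ[f|m]) ω * gN N ω) μ := by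
    intro N
    have h := integrable_condExp (μ := μ) (f := f) (m := m)
    have h2 : Integrable (fun ω => gN N ω * (μ[f|m]) ω) μ :=
      h.bdd_mul (hgNm0 N).aestronglyMeasurable (Eventually.of_forall (hgNbdd N))
    exact h2.congr (Eventually.of_forall fun ω => mul_comm _ _)
  -- bound on truncated integrals
  have hGbddN : ∀ N, ∫ ω, (μ[f|m]) ω * gN N ω ∂μ ≤ C := by
    intro N
    have hae : ∀ᵐ ω ∂μ, (μ[f|m]) ω * gN N ω ≤ C := by
      filter_upwards [hC, hG0] with ω h1 h2
      exact (mul_le_mul_of_nonneg_left (hgNle N ω) h2).trans h1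
    calc ∫ ω, (μ[f|m]) ω * gN N ω ∂μ ≤ ∫ _ω, C ∂μ :=
          integral_mono_ae (hGgNint N) (integrable_const C) hae
      _ = C := by simp
  -- pointwise suprema
  have hmonoF : ∀ ω, Monotone fun N : ℕ => f ω * gN N ω := by
    intro ω N M hNM
    exact mul_le_mul_of_nonneg_left (min_le_min le_rfl (Nat.cast_le.mpr hNM)) (hf0 ω)
  have hsup : ∀ ω, ∀ (c : ℝ), 0 ≤ c →
      (⨆ N : ℕ, ENNReal.ofReal (c * gN N ω)) = ENNReal.ofReal (c * g ω) := by
    intro ω c hc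
    apply le_antisymm
    · exact iSup_le fun N =>
        ENNReal.ofReal_le_ofReal (mul_le_mul_of_nonneg_left (hgNle N ω) hc)
    · have hNc : gN ⌈g ω⌉₊ ω = g ω := min_eq_left (Nat.le_ceil _)
      calc ENNReal.ofReal (c * g ω) = ENNReal.ofReal (c * gN ⌈g ω⌉₊ ω) := by rw [hNc]
        _ ≤ ⨆ N : ℕ, ENNReal.ofReal (c * gN N ω) :=
            le_iSup (fun N : ℕ => ENNReal.ofReal (c * gN N ω)) _
  have hlinF : ∫⁻ ω, ENNReal.ofReal (f ω * g ω) ∂μ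
      = ⨆ N : ℕ, ENNReal.ofReal (∫ ω, f ω * gN N ω ∂μ) := by
    have h1 : ∫⁻ ω, ENNReal.ofReal (f ω * g ω) ∂μ
        = ∫⁻ ω, ⨆ N : ℕ, ENNReal.ofReal (f ω * gN N ω) ∂μ := by
      apply lintegral_congr fun ω => ?_
      exact (hsup ω (f ω) (hf0 ω)).symm
    rw [h1, lintegral_iSup' (f := fun N ω => ENNReal.ofReal (f ω * gN N ω)) (fun N => ((hfm.mul (hgNm0 N)).ennreal_ofReal).aemeasurable)
      (Eventually.of_forall fun ω N M hNM => ENNReal.ofReal_le_ofReal (hmonoF ω hNM))]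
    congr 1
    funext N
    exact (ofReal_integral_eq_lintegral_ofReal (hintN N)
      (Eventually.of_forall fun ω => mul_nonneg (hf0 ω) (hgN0 N ω))).symm
  have hlinG : ∫⁻ ω, ENNReal.ofReal ((μ[f|m]) ω * g ω) ∂μ
      = ⨆ N : ℕ, ENNReal.ofReal (∫ ω, (μ[f|m]) ω * gN N ω ∂μ) := by
    have h1 : ∫⁻ ω, ENNReal.ofReal ((μ[f|m]) ω * g ω) ∂μ
        = ∫⁻ ω, ⨆ N : ℕ, ENNReal.ofReal ((μ[f|m]) ω * gN N ω) ∂μ := by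
      apply lintegral_congr_ae
      filter_upwards [hG0] with ω hω
      exact (hsup ω _ hω).symm
    rw [h1, lintegral_iSup' (f := fun N ω => ENNReal.ofReal ((μ[f|m]) ω * gN N ω)) (fun N => ((hGm0.mul (hgNm0 N)).ennreal_ofReal).aemeasurable) ?_]
    · congr 1
      funext N
      refine (ofReal_integral_eq_lintegral_ofReal (hGgNint N) ?_).symm
      filter_upwards [hG0] with ω hω
      exact mul_nonneg hω (hgN0 N ω)
    · filter_upwards [hG0] with ω hω
      intro N M hNM
      exact ENNReal.ofReal_le_ofReal
        (mul_le_mul_of_nonneg_left (min_le_min le_rfl (Nat.cast_le.mpr hNM)) hω)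
  have heqL : ∫⁻ ω, ENNReal.ofReal (f ω * g ω) ∂μ
      = ∫⁻ ω, ENNReal.ofReal ((μ[f|m]) ω * g ω) ∂μ := by
    rw [hlinF, hlinG]
    congr 1
    funext N
    rw [key N]
  have hboundG : ∫⁻ ω, ENNReal.ofReal ((μ[f|m]) ω * g ω) ∂μ ≤ ENNReal.ofReal C := by
    rw [hlinG]
    exact iSup_le fun N => ENNReal.ofReal_le_ofReal (hGbddN N)
  have hfgint : Integrable (fun ω => f ω * g ω) μ := by
    refine ⟨(hfm.mul hgm0).aestronglyMeasurable, ?_⟩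
    rw [hasFiniteIntegral_iff_ofReal
      (Eventually.of_forall fun ω => mul_nonneg (hf0 ω) (hg0 ω))]
    exact lt_of_le_of_lt (heqL ▸ hboundG) ENNReal.ofReal_lt_top
  have hGg0 : 0 ≤ᵐ[μ] fun ω => (μ[f|m]) ω * g ω := by
    filter_upwards [hG0] with ω hω
    exact mul_nonneg hω (hg0 ω)
  have hGgint : Integrable (fun ω => (μ[f|m]) ω * g ω) μ := by
    refine ⟨(hGm0.mul hgm0).aestronglyMeasurable, ?_⟩
    rw [hasFiniteIntegral_iff_ofReal hGg0]
    exact lt_of_le_of_lt hboundG ENNReal.ofReal_lt_top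
  refine ⟨hfgint, ?_⟩
  rw [integral_eq_lintegral_of_nonneg_ae
      (Eventually.of_forall fun ω => mul_nonneg (hf0 ω) (hg0 ω))
      (hfm.mul hgm0).aestronglyMeasurable,
    integral_eq_lintegral_of_nonneg_ae hGg0 (hGm0.mul hgm0).aestronglyMeasurable, heqL]

end AuxCond

/-- For a stationary process over a finite alphabet and positive integers
`k ≤ n`, the conditional block entropy given the shift-invariant σ-algebra
dominates the expected plug-in estimate: `H(X_1^k|ℐ) ≥ E[H(k, X_1^n)]`. -/
theorem expected_plugIn_le_condH
    {μ : Measure (ℤ → 𝕏)} [IsProbabilityMeasure μ]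
    (hstat : MeasurePreserving shift μ μ)
    (k n : ℕ) (hk : 0 < k) (hkn : k ≤ n) :
    ∫ ω, plugIn k n ω ∂μ ≤ condH μ k := by
  classical
  have hle : MeasurableSpace.invariants (shift (𝕏 := 𝕏)) ≤ _ :=
    MeasurableSpace.invariants_le _
  have hm1 : 1 ≤ n / k := (Nat.one_le_div_iff hk).mpr hkn
  have hmR : (0:ℝ) < ((n / k : ℕ) : ℝ) := by exact_mod_cast hm1
  set G : (Fin k → 𝕏) → (ℤ → 𝕏) → ℝ := condP μ k with hGdef
  set g : (Fin k → 𝕏) → (ℤ → 𝕏) → ℝ := fun w ω => max (-Real.logb 2 (G w ω)) 0 with hgdef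
  set F : ℕ → (Fin k → 𝕏) → (ℤ → 𝕏) → ℝ :=
    fun i w ω => if blk (i * k) k ω = w then (1:ℝ) else 0 with hFdef
  have hFind : ∀ i w, F i w = Set.indicator {ω | blk (i * k) k ω = w} (fun _ => (1:ℝ)) := by
    intro i w; funext ω
    simp [hFdef, Set.indicator_apply, Set.mem_setOf_eq]
  have hFmeas : ∀ i w, Measurable (F i w) := fun i w =>
    measurable_const.ite (measurableSet_blk (i * k) k w) measurable_const
  have hF0 : ∀ i w ω, 0 ≤ F i w ω := by
    intro i w ω; simp only [hFdef]; split <;> norm_num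
  have hF1 : ∀ i w ω, F i w ω ≤ 1 := by
    intro i w ω; simp only [hFdef]; split <;> norm_num
  have hFint : ∀ i w, Integrable (F i w) μ := by
    intro i w
    refine (integrable_const (1:ℝ)).mono' (hFmeas i w).aestronglyMeasurable ?_
    filter_upwards with ω
    rw [Real.norm_eq_abs, abs_of_nonneg (hF0 i w ω)]
    exact hF1 i w ω
  have hcond0 : ∀ w, μ[F 0 w|MeasurableSpace.invariants shift] = G w := by
    intro w
    rw [hFind]
    simp only [Nat.zero_mul]
    rfl
  have hcondi : ∀ (i : ℕ) (w : Fin k → 𝕏), μ[F i w|MeasurableSpace.invariants shift] =ᵐ[μ] G w := by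
    intro i w
    have hcomp : F i w = F 0 w ∘ shift^[i * k] := by
      funext ω
      simp only [hFdef, Function.comp_apply, Nat.zero_mul]
      rw [← blk_shift]
    rw [hcomp, ← hcond0 w]
    exact condexp_shift_iter μ hstat (hFint 0 w) (i * k)
  have hG0 : ∀ w, 0 ≤ᵐ[μ] G w := by
    intro w
    rw [← hcond0 w]
    exact condExp_nonneg (Eventually.of_forall (hF0 0 w))
  have hG1 : ∀ w, ∀ᵐ ω ∂μ, G w ω ≤ 1 := by
    intro w
    have h1 : μ[fun _ => (1:ℝ)|MeasurableSpace.invariants (shift (𝕏 := 𝕏))] = fun _ => (1:ℝ) :=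
      condExp_const hle 1
    have h2 := condExp_mono (m := MeasurableSpace.invariants shift)
      (hFint 0 w) (integrable_const (1:ℝ)) (Eventually.of_forall (hF1 0 w))
    rw [hcond0 w, h1] at h2
    exact h2
  have hGsum : ∀ᵐ ω ∂μ, ∑ w, G w ω = 1 := by
    have hA : (∑ w : Fin k → 𝕏, F 0 w) = fun _ => (1:ℝ) := by
      funext ω
      rw [Finset.sum_apply]
      simp [hFdef, Finset.sum_ite_eq]
    have hB := condExp_finsetSum (μ := μ) (m := MeasurableSpace.invariants shift)
      (s := (Finset.univ : Finset (Fin k → 𝕏))) (f := fun w => F 0 w)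
      (fun w _ => hFint 0 w)
    rw [hA, condExp_const hle (1:ℝ)] at hB
    filter_upwards [hB] with ω hω
    have := hω.symm
    rw [Finset.sum_apply] at this
    simp only [hcond0] at this
    exact this.symm ▸ rfl
  have hsupp : ∀ᵐ ω ∂μ, ∀ (w : Fin k → 𝕏) (i : ℕ), G w ω ≤ 0 → F i w ω = 0 := by
    rw [ae_all_iff]
    intro w
    rw [ae_all_iff]
    intro i
    have h := ae_zero_of_condexp_nonpos hle (hFint i w) (hF0 i w)
    filter_upwards [h, hcondi i w] with ω h1 h2 hG
    exact h1 (by rw [h2]; exact hG)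
  have hg0 : ∀ w ω, 0 ≤ g w ω := fun w ω => le_max_right _ _
  have hgmI : ∀ w, StronglyMeasurable[MeasurableSpace.invariants (shift (𝕏 := 𝕏))] (g w) := by
    intro w
    have hGm : Measurable[MeasurableSpace.invariants (shift (𝕏 := 𝕏))] (G w) := by
      rw [← hcond0 w]
      exact stronglyMeasurable_condExp.measurable
    have h2 : Measurable[MeasurableSpace.invariants (shift (𝕏 := 𝕏))]
        fun ω => -Real.logb 2 (G w ω) := by
      simp only [Real.logb]
      exact ((Real.measurable_log.comp hGm).div_const _).neg
    exact (h2.max measurable_const).stronglyMeasurable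
  have hCbound : ∀ (w : Fin k → 𝕏) (i : ℕ), ∀ᵐ ω ∂μ,
      (μ[F i w|MeasurableSpace.invariants shift]) ω * g w ω ≤ 1 / Real.log 2 := by
    intro w i
    filter_upwards [hcondi i w, hG0 w, hG1 w] with ω h1 h2 h3
    rw [h1]
    exact mul_neg_logb_le _ h2 h3
  have hkey : ∀ (w : Fin k → 𝕏) (i : ℕ),
      Integrable (fun ω => F i w ω * g w ω) μ ∧
      ∫ ω, F i w ω * g w ω ∂μ = ∫ ω, G w ω * g w ω ∂μ := by
    intro w i
    obtain ⟨h1, h2⟩ := pullout_int hle (hFmeas i w) (hF0 i w) (hF1 i w)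
      (hgmI w) (hg0 w) (hCbound w i)
    refine ⟨h1, h2.trans ?_⟩
    exact integral_congr_ae ((hcondi i w).mul (EventuallyEq.rfl (f := g w)))
  have hae_logb : ∀ᵐ ω ∂μ, ∀ w, -Real.logb 2 (G w ω) = g w ω := by
    have hall : ∀ᵐ ω ∂μ, ∀ w, 0 ≤ G w ω ∧ G w ω ≤ 1 :=
      ae_all_iff.mpr fun w => (hG0 w).and (hG1 w)
    filter_upwards [hall] with ω h w
    obtain ⟨h0, h1⟩ := h w
    rcases h0.eq_or_lt with h2 | h2
    · simp only [hgdef]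
      rw [← h2]
      simp
    · rw [hgdef]
      exact (max_eq_left (neg_nonneg.mpr (Real.logb_nonpos one_lt_two h2.le h1))).symm
  -- Part B : condH = ∑ w, ∫ G w * g w
  have hcondH : condH μ k = ∑ w, ∫ ω, G w ω * g w ω ∂μ := by
    have hstep : condH μ k = ∑ w, ∫ ω, F 0 w ω * g w ω ∂μ := by
      rw [condH, ← integral_finset_sum _ (fun w _ => (hkey w 0).1)]
      apply integral_congr_ae
      filter_upwards [hae_logb] with ω h
      have hsum : ∑ w, F 0 w ω * g w ω = g (blk 0 k ω) ω := by
        simp only [hFdef, Nat.zero_mul, ite_mul, one_mul, zero_mul]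
        rw [Finset.sum_ite_eq Finset.univ (blk 0 k ω) (fun w => g w ω)]
        simp
      rw [hsum, ← h (blk 0 k ω)]
    rw [hstep]
    exact Finset.sum_congr rfl fun w _ => (hkey w 0).2
  -- empirical distribution basic facts
  have hed_eq : ∀ ω w, empDist k n ω w
      = (∑ i ∈ Finset.range (n / k), F i w ω) / ((n / k : ℕ) : ℝ) := by
    intro ω w
    simp only [empDist, hFdef]
  have hed0 : ∀ (ω : ℤ → 𝕏) (w : Fin k → 𝕏), 0 ≤ empDist k n ω w := by
    intro ω w
    rw [hed_eq ω w]
    exact div_nonneg (Finset.sum_nonneg fun i _ => hF0 i w ω) hmR.le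
  have hed_sum : ∀ (ω : ℤ → 𝕏), ∑ w, empDist k n ω w = 1 := by
    intro ω
    simp only [hed_eq]
    rw [← Finset.sum_div, Finset.sum_comm]
    have : ∀ i ∈ Finset.range (n / k), ∑ w, F i w ω = 1 := by
      intro i _
      simp [hFdef, Finset.sum_ite_eq]
    rw [Finset.sum_congr rfl this]
    simp only [Finset.sum_const, Finset.card_range, nsmul_eq_mul, mul_one]
    exact div_self hmR.ne'
  -- measurability and bounds for the plug-in estimator
  have hedm : ∀ w : Fin k → 𝕏, Measurable (fun ω => empDist k n ω w) := by
    intro w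
    have h : (fun ω => empDist k n ω w)
        = fun ω => (∑ i ∈ Finset.range (n / k), F i w ω) / ((n / k : ℕ) : ℝ) :=
      funext fun ω => hed_eq ω w
    rw [h]
    exact (Finset.measurable_sum _ fun i _ => hFmeas i w).div_const _
  have hplug_meas : Measurable (plugIn (𝕏 := 𝕏) k n) := by
    have h : plugIn (𝕏 := 𝕏) k n
        = fun ω => -∑ w, empDist k n ω w * Real.logb 2 (empDist k n ω w) := rfl
    rw [h]
    apply Measurable.neg
    apply Finset.measurable_sum
    intro w _
    refine (hedm w).mul ?_
    simp only [Real.logb]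
    exact (Real.measurable_log.comp (hedm w)).div_const _
  have hed1 : ∀ (ω : ℤ → 𝕏) (w : Fin k → 𝕏), empDist k n ω w ≤ 1 := by
    intro ω w
    rw [hed_eq ω w, div_le_one hmR]
    calc ∑ i ∈ Finset.range (n / k), F i w ω
        ≤ ∑ _i ∈ Finset.range (n / k), (1:ℝ) :=
          Finset.sum_le_sum fun i _ => hF1 i w ω
      _ = ((n / k : ℕ) : ℝ) := by simp
  have hplug_bdd : ∀ ω : ℤ → 𝕏, ‖plugIn k n ω‖
      ≤ (Fintype.card (Fin k → 𝕏) : ℝ) * (1 / Real.log 2) := by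
    intro ω
    have h : plugIn k n ω = -∑ w, empDist k n ω w * Real.logb 2 (empDist k n ω w) := rfl
    rw [h, Real.norm_eq_abs, abs_neg]
    calc |∑ w, empDist k n ω w * Real.logb 2 (empDist k n ω w)|
        ≤ ∑ w, |empDist k n ω w * Real.logb 2 (empDist k n ω w)| :=
          Finset.abs_sum_le_sum_abs _ _
      _ ≤ ∑ _w : Fin k → 𝕏, (1 / Real.log 2) := by
          refine Finset.sum_le_sum fun w _ => ?_
          have h0 := hed0 ω w
          have h1 := hed1 ω w
          have hlb : Real.logb 2 (empDist k n ω w) ≤ 0 :=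
            Real.logb_nonpos one_lt_two h0 h1
          rw [abs_mul, abs_of_nonneg h0, abs_of_nonpos hlb,
            show -Real.logb 2 (empDist k n ω w)
              = max (-Real.logb 2 (empDist k n ω w)) 0 from
              (max_eq_left (neg_nonneg.mpr hlb)).symm]
          exact mul_neg_logb_le _ h0 h1
      _ = (Fintype.card (Fin k → 𝕏) : ℝ) * (1 / Real.log 2) := by
          rw [Finset.sum_const, Finset.card_univ, nsmul_eq_mul]
  have hplug_int : Integrable (plugIn (𝕏 := 𝕏) k n) μ :=
    (integrable_const _).mono' hplug_meas.aestronglyMeasurable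
      (Eventually.of_forall hplug_bdd)
  -- a.e. Gibbs bound
  have hgibbs : ∀ᵐ ω ∂μ, plugIn k n ω ≤ ∑ w, empDist k n ω w * g w ω := by
    have hall : ∀ᵐ ω ∂μ, ∀ w, 0 ≤ G w ω ∧ G w ω ≤ 1 :=
      ae_all_iff.mpr fun w => (hG0 w).and (hG1 w)
    filter_upwards [hall, hGsum, hsupp, hae_logb] with ω hall' hsum' hsupp' hlogb'
    have hsupp2 : ∀ w, 0 < empDist k n ω w → 0 < G w ω := by
      intro w hw
      rcases lt_or_ge 0 (G w ω) with h | h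
      · exact h
      · exfalso
        have hzero : ∀ i ∈ Finset.range (n / k), F i w ω = 0 := fun i _ => hsupp' w i h
        have hz : empDist k n ω w = 0 := by
          rw [hed_eq ω w, Finset.sum_congr rfl hzero]
          simp
        rw [hz] at hw
        exact lt_irrefl 0 hw
    have h := gibbs_ineq (fun w => empDist k n ω w) (fun w => G w ω)
      (fun w => hed0 ω w) (hed_sum ω) (fun w => (hall' w).1) (le_of_eq hsum') hsupp2
    calc plugIn k n ω ≤ -∑ w, empDist k n ω w * Real.logb 2 (G w ω) := h
      _ = ∑ w, -(empDist k n ω w * Real.logb 2 (G w ω)) := by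
          rw [← Finset.sum_neg_distrib]
      _ = ∑ w, empDist k n ω w * g w ω := by
          refine Finset.sum_congr rfl fun w _ => ?_
          rw [← hlogb' w]
          ring
  -- integral of the Gibbs bound
  have hRdecomp : ∀ ω : ℤ → 𝕏, ∑ w, empDist k n ω w * g w ω
      = ∑ w, (∑ i ∈ Finset.range (n / k), F i w ω * g w ω) / ((n / k : ℕ) : ℝ) := by
    intro ω
    refine Finset.sum_congr rfl fun w _ => ?_
    rw [hed_eq ω w, div_mul_eq_mul_div, Finset.sum_mul]
  have hRint : Integrable (fun ω => ∑ w, empDist k n ω w * g w ω) μ := by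
    have h : (fun ω => ∑ w, empDist k n ω w * g w ω)
        = fun ω => ∑ w, (∑ i ∈ Finset.range (n / k), F i w ω * g w ω) / ((n / k : ℕ) : ℝ) :=
      funext hRdecomp
    rw [h]
    exact integrable_finset_sum _ fun w _ =>
      (integrable_finset_sum _ fun i _ => (hkey w i).1).div_const _
  have hRval : ∫ ω, ∑ w, empDist k n ω w * g w ω ∂μ
      = ∑ w, ∫ ω, G w ω * g w ω ∂μ := by
    calc ∫ ω, ∑ w, empDist k n ω w * g w ω ∂μ
        = ∫ ω, ∑ w, (∑ i ∈ Finset.range (n / k), F i w ω * g w ω) / ((n / k : ℕ) : ℝ) ∂μ :=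
          integral_congr_ae (Eventually.of_forall hRdecomp)
      _ = ∑ w, ∫ ω, (∑ i ∈ Finset.range (n / k), F i w ω * g w ω) / ((n / k : ℕ) : ℝ) ∂μ :=
          integral_finset_sum _ fun w _ =>
            (integrable_finset_sum _ fun i _ => (hkey w i).1).div_const _
      _ = ∑ w, ∫ ω, G w ω * g w ω ∂μ := by
          refine Finset.sum_congr rfl fun w _ => ?_
          rw [integral_div, integral_finset_sum _ fun i _ => (hkey w i).1,
            Finset.sum_congr rfl fun i _ => (hkey w i).2,
            Finset.sum_const, Finset.card_range, nsmul_eq_mul]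
          exact mul_div_cancel_left₀ _ hmR.ne'
  calc ∫ ω, plugIn k n ω ∂μ
      ≤ ∫ ω, ∑ w, empDist k n ω w * g w ω ∂μ :=
        integral_mono_ae hplug_int hRint hgibbs
    _ = ∑ w, ∫ ω, G w ω * g w ω ∂μ := hRval
    _ = condH μ k := hcondH.symm
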